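/- Let F be a field of characteristic 2, let π be an anisotropic quasi-Pfister form over F, and let ψ be an anisotropic totally singular quadratic form over F such that π ⊆ ψ and nf_F(ψ) ≃ π ⊗ ⟪b⟫ for some b ∈ F×. Then there exists a totally singular quadratic form ρ over F with ρ ⊆ π such that ψ ≃ π ⊥ bρ. -/

import Mathlib

/-!
Diagonal quasilinear `p`-forms over a field `F` of characteristic `p`,
following Hoffmann and Zemková. A form of dimension `n` is recorded by its
coefficient tuple `a : ι → F` (for a finite index type `ι`), the form being
`x ↦ ∑ i, a i * (x i)^p`.
-/

universe u

namespace QLF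

open scoped BigOperators

/-- Evaluation of the diagonal quasilinear `p`-form with coefficients `a` at `x`. -/
def eval (p : ℕ) {F : Type*} [CommRing F] {ι : Type*} [Fintype ι]
    (a : ι → F) (x : ι → F) : F :=
  ∑ i, a i * x i ^ p

/-- A form is isotropic if it has a nontrivial zero. -/
def Isotropic (p : ℕ) {F : Type*} [CommRing F] {ι : Type*} [Fintype ι] (a : ι → F) : Prop :=
  ∃ x : ι → F, x ≠ 0 ∧ eval p a x = 0

/-- A form is anisotropic if it has no nontrivial zero. -/
def Anisotropic (p : ℕ) {F : Type*} [CommRing F] {ι : Type*} [Fintype ι] (a : ι → F) : Prop :=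
  ¬ Isotropic p a

/-- In characteristic `p`, the zero set of a diagonal quasilinear `p`-form is a
linear subspace. -/
def zeroSubmodule (p : ℕ) [Fact p.Prime] {F : Type*} [Field F] [CharP F p]
    {ι : Type*} [Fintype ι] (a : ι → F) : Submodule F (ι → F) where
  carrier := {x | eval p a x = 0}
  zero_mem' := by
    have hp : p ≠ 0 := (Fact.out : p.Prime).ne_zero
    simp [eval, zero_pow hp]
  add_mem' := by
    intro x y hx hy
    haveI : ExpChar F p := .prime Fact.out
    have hxy : eval p a (x + y) = eval p a x + eval p a y := by
      simp only [eval, Pi.add_apply]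
      rw [← Finset.sum_add_distrib]
      exact Finset.sum_congr rfl fun i _ => by rw [add_pow_char, mul_add]
    simp only [Set.mem_setOf_eq] at *
    rw [hxy, hx, hy, add_zero]
  smul_mem' := by
    intro c x hx
    simp only [Set.mem_setOf_eq] at *
    have hcx : eval p a (c • x) = c ^ p * eval p a x := by
      simp only [eval, Pi.smul_apply, smul_eq_mul, Finset.mul_sum]
      exact Finset.sum_congr rfl fun i _ => by rw [mul_pow]; ring
    rw [hcx, hx, mul_zero]

/-- The defect `i₀` of a form: the dimension of its zero set. -/
noncomputable def defect (p : ℕ) [Fact p.Prime] {F : Type*} [Field F] [CharP F p]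
    {ι : Type*} [Fintype ι] (a : ι → F) : ℕ :=
  Module.finrank F (zeroSubmodule p a)

/-- Isometry of forms: a linear bijection carrying one form into the other. -/
def Isometric (p : ℕ) {F : Type*} [Field F] {ι κ : Type*} [Fintype ι] [Fintype κ]
    (a : ι → F) (b : κ → F) : Prop :=
  ∃ T : (ι → F) ≃ₗ[F] (κ → F), ∀ x, eval p a x = eval p b (T x)

/-- `a` is a subform of `b`. -/
def Subform (p : ℕ) {F : Type*} [Field F] {ι κ : Type*} [Fintype ι] [Fintype κ]
    (a : ι → F) (b : κ → F) : Prop :=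
  ∃ T : (ι → F) →ₗ[F] (κ → F), Function.Injective T ∧ ∀ x, eval p a x = eval p b (T x)

/-- Similarity of forms: `a ≃ c·b` for some scalar `c ≠ 0`. -/
def Similar (p : ℕ) {F : Type*} [Field F] {ι κ : Type*} [Fintype ι] [Fintype κ]
    (a : ι → F) (b : κ → F) : Prop :=
  ∃ c : F, c ≠ 0 ∧ Isometric p a (fun i => c * b i)

/-- Vishik equivalence: same dimension, and equal defects over every field
extension `E/F`. -/
def VishikEquiv (p : ℕ) [Fact p.Prime] {F : Type u} [Field F] [CharP F p]
    {ι κ : Type*} [Fintype ι] [Fintype κ] (a : ι → F) (b : κ → F) : Prop :=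
  Fintype.card ι = Fintype.card κ ∧
    ∀ (E : Type u) [Field E] [CharP E p] (f : F →+* E),
      defect p (f ∘ a) = defect p (f ∘ b)

/-- Weak Vishik equivalence: same dimension, and equal defects over every field
extension of the shape `E = F(α)` with `αᵖ ∈ F` (this includes `E = F`). -/
def WeakVishikEquiv (p : ℕ) [Fact p.Prime] {F : Type u} [Field F] [CharP F p]
    {ι κ : Type*} [Fintype ι] [Fintype κ] (a : ι → F) (b : κ → F) : Prop :=
  Fintype.card ι = Fintype.card κ ∧
    ∀ (E : Type u) [Field E] [CharP E p] (f : F →+* E) (α : E),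
      α ^ p ∈ Set.range ⇑f →
      Subfield.closure (insert α (Set.range ⇑f)) = ⊤ →
      defect p (f ∘ a) = defect p (f ∘ b)

/-- The set `Fᵖ` of `p`-th powers. -/
def pSet (p : ℕ) (F : Type*) [Field F] : Set F := Set.range fun x : F => x ^ p

/-- The subfield `Fᵖ` of `p`-th powers (in characteristic `p` the set of `p`-th
powers is already a subfield, so the closure adds nothing). -/
def pthSubfield (p : ℕ) (F : Type*) [Field F] : Subfield F :=
  Subfield.closure (pSet p F)

/-- The subfield `Fᵖ(s)` generated by a set `s` over `Fᵖ`. -/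
def adjoin (p : ℕ) {F : Type*} [Field F] (s : Set F) : Subfield F :=
  Subfield.closure (pSet p F ∪ s)

/-- The degree `[N : k]` of a subfield `N` over a subfield `k` (for `k ≤ N`,
the `k`-span of `N` in `F` is `N` itself, so this is the `k`-dimension of `N`). -/
noncomputable def degOver {F : Type*} [Field F] (k : Subfield F) (N : Subfield F) : ℕ :=
  Module.finrank k (Submodule.span k (N : Set F))

/-- The set `D_F(φ)` of values of the form. -/
def values (p : ℕ) {F : Type*} [CommRing F] {ι : Type*} [Fintype ι] (a : ι → F) : Set F :=
  Set.range (eval p a)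

/-- The norm field `N_F(φ)`: the subfield generated over `Fᵖ` by all quotients
of nonzero values of `φ`. -/
def normField (p : ℕ) {F : Type*} [Field F] {ι : Type*} [Fintype ι] (a : ι → F) : Subfield F :=
  adjoin p {z : F | ∃ u ∈ values p a, ∃ v ∈ values p a, u ≠ 0 ∧ v ≠ 0 ∧ z = u / v}

/-- The norm degree `ndeg_F(φ) = [N_F(φ) : Fᵖ]`. -/
noncomputable def ndeg (p : ℕ) {F : Type*} [Field F] {ι : Type*} [Fintype ι] (a : ι → F) : ℕ :=
  degOver (pthSubfield p F) (normField p a)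

/-- An anisotropic form is minimal if `ndeg_F(φ) = p^(dim φ - 1)`. -/
def Minimal (p : ℕ) {F : Type*} [Field F] {ι : Type*} [Fintype ι] (a : ι → F) : Prop :=
  Anisotropic p a ∧ ndeg p a = p ^ (Fintype.card ι - 1)

/-- The quasi-Pfister form `⟪b₁,…,bₙ⟫`: its coefficients are all products
`b₁^{e₁}⋯bₙ^{eₙ}` with `0 ≤ eᵢ ≤ p-1`. -/
def pfister (p : ℕ) {F : Type*} [CommRing F] {n : ℕ} (b : Fin n → F) :
    (Fin n → Fin p) → F :=
  fun e => ∏ i, b i ^ (e i : ℕ)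

/-- A form is a quasi-Pfister form if it is isometric to some `⟪b₁,…,bₙ⟫`
with all `bᵢ ∈ F×`. -/
def IsQuasiPfister (p : ℕ) {F : Type*} [Field F] {ι : Type*} [Fintype ι] (a : ι → F) : Prop :=
  ∃ (n : ℕ) (b : Fin n → F), (∀ i, b i ≠ 0) ∧ Isometric p a (pfister p b)

/-- `a` is a quasi-Pfister neighbor of the form `π`: `c·a ⊆ π` for some `c ≠ 0`
and `p · dim a > dim π`. -/
def IsNeighborOf (p : ℕ) {F : Type*} [Field F] {ι κ : Type*} [Fintype ι] [Fintype κ]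
    (a : ι → F) (π : κ → F) : Prop :=
  ∃ c : F, c ≠ 0 ∧ Subform p (fun i => c * a i) π ∧ p * Fintype.card ι > Fintype.card κ

/-- `a` is a quasi-Pfister neighbor (of some quasi-Pfister form). -/
def IsQPNeighbor (p : ℕ) {F : Type*} [Field F] {ι : Type*} [Fintype ι] (a : ι → F) : Prop :=
  ∃ (n : ℕ) (b : Fin n → F), (∀ i, b i ≠ 0) ∧ IsNeighborOf p a (pfister p b)

/-- `a` is a quasi-Pfister neighbor of codimension one of some anisotropic
quasi-Pfister form: `dim π - dim a = 1`. -/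
def IsQPNeighborCodimOne (p : ℕ) {F : Type*} [Field F] {ι : Type*} [Fintype ι]
    (a : ι → F) : Prop :=
  ∃ (n : ℕ) (b : Fin n → F), (∀ i, b i ≠ 0) ∧ Anisotropic p (pfister p b) ∧
    IsNeighborOf p a (pfister p b) ∧ Fintype.card ι + 1 = p ^ n

/-- Tensor product of diagonal forms: coefficients `aᵢ · bⱼ`. -/
def tensor (p : ℕ) {F : Type*} [CommRing F] {ι κ : Type*}
    (a : ι → F) (b : κ → F) : ι × κ → F :=
  fun ik => a ik.1 * b ik.2

/-- The set `G_F(φ) = {x ∈ F× : xφ ≃ φ} ∪ {0}` of similarity factors. -/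
def simFactors (p : ℕ) {F : Type*} [Field F] {ι : Type*} [Fintype ι] (a : ι → F) : Set F :=
  {x | x ≠ 0 ∧ Isometric p (fun i => x * a i) a} ∪ {0}

/-- `b` is the anisotropic part of `a`: `b` is anisotropic and
`a ≃ b ⊥ (m × ⟨0⟩)` for some `m`. -/
def IsAnisotropicPart (p : ℕ) {F : Type*} [Field F] {ι κ : Type*} [Fintype ι] [Fintype κ]
    (a : ι → F) (b : κ → F) : Prop :=
  Anisotropic p b ∧ ∃ m : ℕ, Isometric p a (Sum.elim b fun _ : Fin m => (0 : F))

/-- `⟪c₁,…,cₘ⟫` is (a representative of) the norm form of `a`: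
`N_F(a) = Fᵖ(c₁,…,cₘ)` and `ndeg_F(a) = pᵐ`. -/
def IsNormForm (p : ℕ) {F : Type*} [Field F] {ι : Type*} [Fintype ι] (a : ι → F)
    {m : ℕ} (c : Fin m → F) : Prop :=
  normField p a = adjoin p (Set.range c) ∧ ndeg p a = p ^ m

end QLF


set_option linter.unusedSectionVars false

namespace QLFAux
open QLF

variable {F : Type u} [Field F] [CharP F 2]

theorem eval_zero {ι : Type*} [Fintype ι] (a : ι → F) : eval 2 a 0 = 0 := by
  simp [eval]

theorem eval_add {ι : Type*} [Fintype ι] (a x y : ι → F) :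
    eval 2 a (x + y) = eval 2 a x + eval 2 a y := by
  haveI : Fact (Nat.Prime 2) := ⟨Nat.prime_two⟩
  simp only [eval, Pi.add_apply]
  rw [← Finset.sum_add_distrib]
  exact Finset.sum_congr rfl fun i _ => by rw [add_pow_char, mul_add]

theorem eval_neg {ι : Type*} [Fintype ι] (a x : ι → F) :
    eval 2 a (-x) = eval 2 a x := by
  simp [eval]

theorem eval_smul {ι : Type*} [Fintype ι] (a : ι → F) (c : F) (x : ι → F) :
    eval 2 a (c • x) = c ^ 2 * eval 2 a x := by
  simp only [eval, Pi.smul_apply, smul_eq_mul, Finset.mul_sum]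
  exact Finset.sum_congr rfl fun i _ => by rw [mul_pow]; ring

/-- eval as an additive monoid hom. -/
def evalHom {ι : Type*} [Fintype ι] (a : ι → F) : (ι → F) →+ F where
  toFun := eval 2 a
  map_zero' := eval_zero a
  map_add' := eval_add a

theorem eval_sum {ι κ : Type*} [Fintype ι] (a : ι → F) (t : Finset κ) (v : κ → ι → F) :
    eval 2 a (∑ j ∈ t, v j) = ∑ j ∈ t, eval 2 a (v j) :=
  map_sum (evalHom a) v t

theorem eval_lincomb {ι κ : Type*} [Fintype ι] [Fintype κ] (a : ι → F)
    (x : κ → F) (v : κ → ι → F) :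
    eval 2 a (∑ j, x j • v j) = ∑ j, x j ^ 2 * eval 2 a (v j) := by
  rw [eval_sum]
  exact Finset.sum_congr rfl fun j _ => eval_smul a (x j) (v j)

theorem eval_single {ι : Type*} [Fintype ι] [DecidableEq ι] (a : ι → F) (i : ι) (t : F) :
    eval 2 a (Pi.single i t) = a i * t ^ 2 := by
  rw [eval, Finset.sum_eq_single i]
  · simp
  · intro j _ hj; simp [Pi.single_apply, hj]
  · simp

theorem aniso_eq_zero {ι : Type*} [Fintype ι] {a : ι → F} (h : Anisotropic 2 a)
    {x : ι → F} (hx : eval 2 a x = 0) : x = 0 := by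
  by_contra hne
  exact h ⟨x, hne, hx⟩

/-! ### Pfister value sets -/

theorem fin2_cases (x : Fin 2) : x = 0 ∨ x = 1 := by
  rcases x with ⟨_ | _ | k, h⟩
  · exact .inl rfl
  · exact .inr rfl
  · omega

theorem fin2_sub_sub (x : Fin 2) : 1 - (1 - x) = x := by
  rcases fin2_cases x with h | h <;> subst h <;> decide

variable {n : ℕ} (d : Fin n → F)

/-- flip the `i`-th exponent. -/
def flipAt (i : Fin n) : (Fin n → Fin 2) ≃ (Fin n → Fin 2) where
  toFun e := Function.update e i (1 - e i)
  invFun e := Function.update e i (1 - e i)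
  left_inv e := by
    ext j
    rcases eq_or_ne j i with rfl | hj
    · simp [Function.update_self]
    · simp [Function.update_of_ne hj]
  right_inv e := by
    ext j
    rcases eq_or_ne j i with rfl | hj
    · simp [Function.update_self]
    · simp [Function.update_of_ne hj]

theorem pfister_apply (e : Fin n → Fin 2) : pfister 2 d e = ∏ i, d i ^ (e i : ℕ) := rfl

theorem pfister_zero : pfister 2 d 0 = 1 := by
  simp [pfister]

theorem pfister_single (i : Fin n) : pfister 2 d (Pi.single i 1) = d i := by
  rw [pfister_apply, Finset.prod_eq_single i]
  · simp
  · intro j _ hj; simp [Pi.single_apply, hj]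
  · simp

theorem mul_pfister_coeff (i : Fin n) (e : Fin n → Fin 2) :
    d i * pfister 2 d e
      = (if e i = 0 then 1 else d i) ^ 2 * pfister 2 d (flipAt i e) := by
  have hmem : i ∈ (Finset.univ : Finset (Fin n)) := Finset.mem_univ i
  have h1 : pfister 2 d (flipAt i e)
      = d i ^ ((1 - e i : Fin 2) : ℕ) * ∏ j ∈ Finset.univ \ {i}, d j ^ (e j : ℕ) := by
    rw [pfister_apply, show (flipAt i e : Fin n → Fin 2) = Function.update e i (1 - e i) from rfl]
    rw [Finset.prod_congr rfl (fun x _ => show d x ^ ((Function.update e i (1 - e i) x : Fin 2) : ℕ)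
        = Function.update (fun j => d j ^ (e j : ℕ)) i (d i ^ ((1 - e i : Fin 2) : ℕ)) x from ?_)]
    · exact Finset.prod_update_of_mem hmem _ _
    · rcases eq_or_ne x i with rfl | hx
      · simp
      · simp [Function.update_of_ne hx]
  have h2 : pfister 2 d e = d i ^ ((e i : Fin 2) : ℕ) * ∏ j ∈ Finset.univ \ {i}, d j ^ (e j : ℕ) := by
    conv_lhs => rw [pfister_apply, ← Function.update_eq_self i e]
    rw [Finset.prod_congr rfl (fun x _ => show d x ^ ((Function.update e i (e i) x : Fin 2) : ℕ)
        = Function.update (fun j => d j ^ (e j : ℕ)) i (d i ^ ((e i : Fin 2) : ℕ)) x from ?_)]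
    · exact Finset.prod_update_of_mem hmem _ _
    · rcases eq_or_ne x i with rfl | hx
      · simp
      · simp [Function.update_of_ne hx]
  rw [h1, h2]
  rcases fin2_cases (e i) with h | h <;> rw [h] <;> simp <;> ring

/-- The set of values of a quasi-Pfister form. -/
def pvals : Set F := Set.range (eval 2 (pfister 2 d))

theorem zero_mem_pvals : (0 : F) ∈ pvals d := ⟨0, eval_zero _⟩

theorem sq_mul_mem_pvals {u : F} (hu : u ∈ pvals d) (s : F) : s ^ 2 * u ∈ pvals d := by
  obtain ⟨x, rfl⟩ := hu
  exact ⟨s • x, eval_smul _ s x⟩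

theorem sq_mem_pvals (s : F) : s ^ 2 ∈ pvals d := by
  refine ⟨Pi.single 0 s, ?_⟩
  rw [eval_single, pfister_zero, one_mul]

theorem one_mem_pvals : (1 : F) ∈ pvals d := by
  simpa using sq_mem_pvals d 1

theorem add_mem_pvals {u v : F} (hu : u ∈ pvals d) (hv : v ∈ pvals d) :
    u + v ∈ pvals d := by
  obtain ⟨x, rfl⟩ := hu; obtain ⟨y, rfl⟩ := hv
  exact ⟨x + y, eval_add _ x y⟩

theorem sum_mem_pvals {κ : Type*} (t : Finset κ) (g : κ → F)
    (h : ∀ j ∈ t, g j ∈ pvals d) : ∑ j ∈ t, g j ∈ pvals d := by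
  classical
  induction t using Finset.induction_on with
  | empty => simpa using zero_mem_pvals d
  | insert _ _ hnotmem ih =>
    rw [Finset.sum_insert hnotmem]
    exact add_mem_pvals d (h _ (Finset.mem_insert_self _ _))
      (ih fun j hj => h j (Finset.mem_insert_of_mem hj))

theorem coeff_mem_pvals (e : Fin n → Fin 2) : pfister 2 d e ∈ pvals d := by
  refine ⟨Pi.single e 1, ?_⟩
  rw [eval_single]; ring

theorem gen_mul_mem_pvals (i : Fin n) {u : F} (hu : u ∈ pvals d) :
    d i * u ∈ pvals d := by
  obtain ⟨x, rfl⟩ := hu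
  refine ⟨fun e => (if (flipAt i e : Fin n → Fin 2) i = 0 then 1 else d i)
      * x (flipAt i e), ?_⟩
  rw [eval, eval, Finset.mul_sum]
  rw [← Equiv.sum_comp (flipAt i)
    (fun e => pfister 2 d e *
      ((if (flipAt i e : Fin n → Fin 2) i = 0 then 1 else d i) * x (flipAt i e)) ^ 2)]
  refine Finset.sum_congr rfl fun e _ => ?_
  have hflip : flipAt i (flipAt i e) = e := (flipAt i).left_inv e
  rw [hflip]
  rw [← mul_assoc, mul_pfister_coeff d i e]
  ring

theorem monomial_mul_mem_pvals (t : Finset (Fin n)) (f : Fin n → Fin 2) {u : F}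
    (hu : u ∈ pvals d) : (∏ i ∈ t, d i ^ (f i : ℕ)) * u ∈ pvals d := by
  classical
  induction t using Finset.induction_on with
  | empty => simpa using hu
  | @insert a t hnotmem ih =>
    rw [Finset.prod_insert hnotmem, mul_assoc]
    rcases fin2_cases (f a) with h | h <;> rw [h]
    · simpa using ih
    · simpa using gen_mul_mem_pvals d a ih

theorem mul_mem_pvals {u v : F} (hu : u ∈ pvals d) (hv : v ∈ pvals d) :
    u * v ∈ pvals d := by
  obtain ⟨x, rfl⟩ := hv
  rw [eval, Finset.mul_sum]
  refine sum_mem_pvals d _ _ fun e _ => ?_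
  have : u * (pfister 2 d e * x e ^ 2) = x e ^ 2 * ((∏ i, d i ^ (e i : ℕ)) * u) := by
    rw [pfister_apply]; ring
  rw [this]
  exact sq_mul_mem_pvals d (monomial_mul_mem_pvals d _ _ hu) _

theorem inv_mem_pvals {u : F} (hu : u ∈ pvals d) : u⁻¹ ∈ pvals d := by
  rcases eq_or_ne u 0 with rfl | h
  · simpa using zero_mem_pvals d
  · have : u⁻¹ = (u⁻¹) ^ 2 * u := by
      rw [pow_two, mul_assoc, inv_mul_cancel₀ h, mul_one]
    rw [this]
    exact sq_mul_mem_pvals d hu _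

/-- The value set of a quasi-Pfister form is a subfield. -/
def pvalSubfield : Subfield F where
  carrier := pvals d
  mul_mem' := mul_mem_pvals d
  one_mem' := one_mem_pvals d
  add_mem' := add_mem_pvals d
  zero_mem' := zero_mem_pvals d
  neg_mem' := by intro x hx; rwa [CharTwo.neg_eq]
  inv_mem' := fun _ hx => inv_mem_pvals d hx

theorem adjoin_range_eq : adjoin 2 (Set.range d) = pvalSubfield d := by
  apply le_antisymm
  · apply Subfield.closure_le.2
    rintro z (⟨s, rfl⟩ | ⟨i, rfl⟩)
    · exact sq_mem_pvals d s
    · rw [← pfister_single d i]; exact coeff_mem_pvals d _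
  · rintro z ⟨x, rfl⟩
    rw [eval]
    refine sum_mem fun e _ => mul_mem ?_ ?_
    · rw [pfister_apply]
      refine prod_mem fun i _ => pow_mem ?_ _
      exact Subfield.subset_closure (Or.inr ⟨i, rfl⟩)
    · exact Subfield.subset_closure (Or.inl ⟨x e, rfl⟩)

/-! ### Isometry transfer -/

theorem isometric_range_eq {ι κ : Type*} [Fintype ι] [Fintype κ] {a : ι → F} {b : κ → F}
    (h : Isometric 2 a b) : Set.range (eval 2 a) = Set.range (eval 2 b) := by
  obtain ⟨T, hT⟩ := h
  ext u
  constructor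
  · rintro ⟨x, rfl⟩; exact ⟨T x, (hT x).symm⟩
  · rintro ⟨y, rfl⟩
    refine ⟨T.symm y, ?_⟩
    rw [hT (T.symm y), T.apply_symm_apply]

theorem isometric_aniso {ι κ : Type*} [Fintype ι] [Fintype κ] {a : ι → F} {b : κ → F}
    (h : Isometric 2 a b) (ha : Anisotropic 2 a) : Anisotropic 2 b := by
  obtain ⟨T, hT⟩ := h
  rintro ⟨x, hx0, hx⟩
  refine ha ⟨T.symm x, fun h0 => hx0 ?_, ?_⟩
  · have := congrArg T h0
    rwa [T.apply_symm_apply, map_zero] at this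
  · rw [hT (T.symm x), T.apply_symm_apply, hx]

/-! ### Tensor with a 1-fold Pfister form -/

theorem sum_fun_fin_one_two (g : (Fin 1 → Fin 2) → F) :
    ∑ f, g f = g (fun _ => 0) + g (fun _ => 1) := by
  rw [← Equiv.sum_comp (Equiv.funUnique (Fin 1) (Fin 2)).symm g, Fin.sum_univ_two]
  rfl

theorem pfister_one_const (b : F) (v : Fin 2) :
    pfister 2 (fun _ : Fin 1 => b) (fun _ => v) = b ^ (v : ℕ) := by
  rw [pfister_apply]
  simp

theorem tensor_eval {r : ℕ} (πc : Fin r → F) (b : F)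
    (w : ((Fin r → Fin 2) × (Fin 1 → Fin 2)) → F) :
    eval 2 (tensor 2 (pfister 2 πc) (pfister 2 fun _ : Fin 1 => b)) w
      = eval 2 (pfister 2 πc) (fun e => w (e, fun _ => 0))
        + b * eval 2 (pfister 2 πc) (fun e => w (e, fun _ => 1)) := by
  rw [eval, Fintype.sum_prod_type]
  rw [Finset.sum_congr rfl fun e _ => sum_fun_fin_one_two
    (fun f => tensor 2 (pfister 2 πc) (pfister 2 fun _ : Fin 1 => b) (e, f) * w (e, f) ^ 2)]
  rw [Finset.sum_add_distrib, eval, eval, Finset.mul_sum]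
  congr 1
  · refine Finset.sum_congr rfl fun e _ => ?_
    show pfister 2 πc e * pfister 2 (fun _ : Fin 1 => b) (fun _ => 0) * _ = _
    rw [pfister_one_const]
    norm_num
  · refine Finset.sum_congr rfl fun e _ => ?_
    show pfister 2 πc e * pfister 2 (fun _ : Fin 1 => b) (fun _ => 1) * _ = _
    rw [pfister_one_const]
    norm_num
    ring

/-! ### Anisotropy of the norm form -/

theorem pfister_aniso_of_finrank {kk : ℕ} (c : Fin kk → F)
    (hfr : Module.finrank (pthSubfield 2 F)
      (Submodule.span (pthSubfield 2 F) (Set.range (pfister 2 c))) = 2 ^ kk) :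
    Anisotropic 2 (pfister 2 c) := by
  set k := pthSubfield 2 F
  have hsq : ∀ s : F, s ^ 2 ∈ k := fun s => Subfield.subset_closure ⟨s, rfl⟩
  have hcard : Fintype.card (Fin kk → Fin 2) = 2 ^ kk := by
    rw [Fintype.card_fun, Fintype.card_fin, Fintype.card_fin]
  have hli : LinearIndependent k (pfister 2 c) := by
    rw [linearIndependent_iff_card_eq_finrank_span]
    rw [hcard, Set.finrank]
    exact hfr.symm
  rintro ⟨x, hx0, hx⟩
  apply hx0
  have := Fintype.linearIndependent_iff.1 hli (fun e => ⟨x e ^ 2, hsq (x e)⟩) ?_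
  · funext e
    have he := this e
    rw [Subtype.ext_iff] at he
    have : x e ^ 2 = 0 := he
    exact pow_eq_zero_iff (two_ne_zero) |>.1 this
  · calc ∑ e, (⟨x e ^ 2, hsq (x e)⟩ : k) • pfister 2 c e
        = ∑ e, pfister 2 c e * x e ^ 2 := by
          refine Finset.sum_congr rfl fun e _ => ?_
          show x e ^ 2 * pfister 2 c e = _
          ring
      _ = 0 := hx

/-- Linear combination map. -/
def lc {V : Type*} [AddCommGroup V] [Module F V] {κ : Type*} [Fintype κ] (v : κ → V) :
    (κ → F) →ₗ[F] V where
  toFun x := ∑ j, x j • v j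
  map_add' x y := by simp [add_smul, Finset.sum_add_distrib]
  map_smul' c x := by simp [Finset.smul_sum, mul_smul]

theorem lc_apply {V : Type*} [AddCommGroup V] [Module F V] {κ : Type*} [Fintype κ]
    (v : κ → V) (x : κ → F) : lc v x = ∑ j, x j • v j := rfl

end QLFAux

/-- Characteristic 2. Let `π` be an anisotropic quasi-Pfister form
and `ψ` an anisotropic totally singular quadratic form with `π ⊆ ψ` and
`nf_F(ψ) ≃ π ⊗ ⟪b⟫` for some `b ∈ F×`. Then there is a form `ρ ⊆ π` with
`ψ ≃ π ⊥ bρ`. -/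
theorem stmt_10 {F : Type u} [Field F] [CharP F 2]
    {r m : ℕ} (πc : Fin r → F) (hπc : ∀ i, πc i ≠ 0)
    (hπan : QLF.Anisotropic 2 (QLF.pfister 2 πc))
    (ψ : Fin m → F) (hψan : QLF.Anisotropic 2 ψ)
    (hsub : QLF.Subform 2 (QLF.pfister 2 πc) ψ)
    (b : F) (hb : b ≠ 0)
    (hnf : ∃ (k : ℕ) (c : Fin k → F), QLF.IsNormForm 2 ψ c ∧
      QLF.Isometric 2 (QLF.pfister 2 c)
        (QLF.tensor 2 (QLF.pfister 2 πc) (QLF.pfister 2 fun _ : Fin 1 => b))) :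
    ∃ (s : ℕ) (ρ : Fin s → F), QLF.Subform 2 ρ (QLF.pfister 2 πc) ∧
      QLF.Isometric 2 ψ (Sum.elim (QLF.pfister 2 πc) fun j => b * ρ j) := by
  classical
  obtain ⟨T, hTinj, hT⟩ := hsub
  obtain ⟨kk, c, ⟨hNF, hndeg⟩, hiso⟩ := hnf
  set πf := QLF.pfister 2 πc with hπf
  set k := QLF.pthSubfield 2 F with hk
  have hsq : ∀ s : F, s ^ 2 ∈ k := fun s => Subfield.subset_closure ⟨s, rfl⟩
  -- identification of the norm field with the value set of the norm form
  have hNset : (QLF.normField 2 ψ : Set F) = Set.range (QLF.eval 2 (QLF.pfister 2 c)) := by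
    rw [hNF, QLFAux.adjoin_range_eq]
    rfl
  -- the norm form is anisotropic
  have hspan : Submodule.span k ((QLF.normField 2 ψ : Set F))
      = Submodule.span k (Set.range (QLF.pfister 2 c)) := by
    apply le_antisymm
    · rw [Submodule.span_le]
      rw [hNset]
      rintro u ⟨x, rfl⟩
      rw [QLF.eval]
      refine Submodule.sum_mem _ fun e _ => ?_
      have he : QLF.pfister 2 c e * x e ^ 2
          = (⟨x e ^ 2, hsq (x e)⟩ : k) • QLF.pfister 2 c e := by
        show _ = x e ^ 2 * QLF.pfister 2 c e
        ring
      rw [he]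
      exact Submodule.smul_mem _ _ (Submodule.subset_span ⟨e, rfl⟩)
    · rw [Submodule.span_le]
      rintro u ⟨e, rfl⟩
      apply Submodule.subset_span
      rw [hNset]
      exact QLFAux.coeff_mem_pvals c e
  have hanic : QLF.Anisotropic 2 (QLF.pfister 2 c) := by
    refine QLFAux.pfister_aniso_of_finrank c ?_
    rw [← hk, ← hspan]
    exact hndeg
  have hanit : QLF.Anisotropic 2
      (QLF.tensor 2 πf (QLF.pfister 2 fun _ : Fin 1 => b)) :=
    QLFAux.isometric_aniso hiso hanic
  -- key orthogonality
  have key0 : ∀ y z : (Fin r → Fin 2) → F,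
      QLF.eval 2 πf y + b * QLF.eval 2 πf z = 0 → y = 0 ∧ z = 0 := by
    intro y z h
    set w : ((Fin r → Fin 2) × (Fin 1 → Fin 2)) → F :=
      fun q => if q.2 = (fun _ => 0) then y q.1 else z q.1 with hwdef
    have h10 : ((fun _ => 1) : Fin 1 → Fin 2) ≠ (fun _ => 0) := by
      intro hcon
      exact one_ne_zero (congrFun hcon 0)
    have hw0 : (fun e => w (e, fun _ => 0)) = y := by funext e; simp [hwdef]
    have hw1 : (fun e => w (e, fun _ => 1)) = z := by funext e; simp [hwdef, h10]
    have hev : QLF.eval 2 (QLF.tensor 2 πf (QLF.pfister 2 fun _ : Fin 1 => b)) w = 0 := by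
      rw [QLFAux.tensor_eval, hw0, hw1, h]
    have hwz := QLFAux.aniso_eq_zero hanit hev
    constructor
    · rw [← hw0, hwz]; rfl
    · rw [← hw1, hwz]; rfl
  -- 1 is a value of ψ
  have hone : (1 : F) ∈ Set.range (QLF.eval 2 ψ) := by
    refine ⟨T (Pi.single 0 1), ?_⟩
    rw [← hT, QLFAux.eval_single, hπf, QLFAux.pfister_zero]
    ring
  -- every value of ψ lies in K + bK
  have hval : ∀ x : Fin m → F, ∃ y z : (Fin r → Fin 2) → F,
      QLF.eval 2 ψ x = QLF.eval 2 πf y + b * QLF.eval 2 πf z := by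
    intro x
    rcases eq_or_ne (QLF.eval 2 ψ x) 0 with h0 | h0
    · exact ⟨0, 0, by rw [h0, QLFAux.eval_zero]; ring⟩
    · have hmem : QLF.eval 2 ψ x ∈ (QLF.normField 2 ψ : Set F) := by
        apply Subfield.subset_closure
        right
        exact ⟨QLF.eval 2 ψ x, ⟨x, rfl⟩, 1, hone, h0, one_ne_zero, (div_one _).symm⟩
      rw [hNset, QLFAux.isometric_range_eq hiso] at hmem
      obtain ⟨w, hwx⟩ := hmem
      exact ⟨_, _, by rw [← hwx]; exact QLFAux.tensor_eval πc b w⟩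
  -- the complement submodule
  let Z : Submodule F (Fin m → F) :=
    { carrier := {x | ∃ z, QLF.eval 2 ψ x = b * QLF.eval 2 πf z}
      zero_mem' := ⟨0, by rw [QLFAux.eval_zero, QLFAux.eval_zero, mul_zero]⟩
      add_mem' := by
        rintro x x' ⟨z, hz⟩ ⟨z', hz'⟩
        exact ⟨z + z', by rw [QLFAux.eval_add, hz, hz', QLFAux.eval_add, mul_add]⟩
      smul_mem' := by
        rintro a x ⟨z, hz⟩
        refine ⟨a • z, ?_⟩
        rw [QLFAux.eval_smul, hz, QLFAux.eval_smul]
        ring }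
  set s := Module.finrank F Z with hs
  let zb : Module.Basis (Fin s) F Z := Module.finBasis F Z
  have hzb : ∀ j, ∃ z, QLF.eval 2 ψ ((zb j : Fin m → F)) = b * QLF.eval 2 πf z :=
    fun j => (zb j).2
  choose w hw using hzb
  set v : Fin s → (Fin m → F) := fun j => (zb j : Fin m → F) with hv
  -- coercion of linear combinations from Z
  have hcoeZ : ∀ x : Fin s → F,
      QLFAux.lc v x = ((QLFAux.lc (fun j => zb j) x : Z) : Fin m → F) := by
    intro x
    show _ = Z.subtype (QLFAux.lc (fun j => zb j) x)
    rw [QLFAux.lc_apply, QLFAux.lc_apply, map_sum]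
    exact Finset.sum_congr rfl fun j _ => by simp [hv]
  have hbz : ∀ x : Fin s → F, QLFAux.lc v x = 0 → x = 0 := by
    intro x hx
    rw [hcoeZ] at hx
    have h0 : (QLFAux.lc (fun j => zb j) x : Z) = 0 := Subtype.ext hx
    have h1 : ∑ j, x j • zb j = 0 := h0
    have h2 := Fintype.linearIndependent_iff.1 zb.linearIndependent x h1
    funext j
    exact h2 j
  -- evaluation identities
  have hZeval : ∀ x : Fin s → F,
      QLF.eval 2 ψ (QLFAux.lc v x) = b * QLF.eval 2 πf (QLFAux.lc w x) := by
    intro x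
    rw [QLFAux.lc_apply, QLFAux.eval_lincomb, QLFAux.lc_apply, QLFAux.eval_lincomb,
      Finset.mul_sum]
    refine Finset.sum_congr rfl fun j _ => ?_
    rw [hw j]
    ring
  have hUeval : ∀ x : Fin s → F,
      QLF.eval 2 (fun j => QLF.eval 2 πf (w j)) x = QLF.eval 2 πf (QLFAux.lc w x) := by
    intro x
    rw [QLFAux.lc_apply, QLFAux.eval_lincomb, QLF.eval]
    exact Finset.sum_congr rfl fun j _ => by ring
  have hUinj : Function.Injective ((QLFAux.lc w : (Fin s → F) →ₗ[F] (Fin r → Fin 2) → F)) := by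
    rw [← LinearMap.ker_eq_bot]
    refine LinearMap.ker_eq_bot'.2 fun x hx => ?_
    have h1 := hZeval x
    rw [hx, QLFAux.eval_zero, mul_zero] at h1
    exact hbz x (QLFAux.aniso_eq_zero hψan h1)
  -- the global linear map
  let S : (((Fin r → Fin 2) ⊕ Fin s) → F) →ₗ[F] (Fin m → F) :=
    T ∘ₗ LinearMap.funLeft F F Sum.inl
      + (Z.subtype ∘ₗ QLFAux.lc (fun j => zb j)) ∘ₗ LinearMap.funLeft F F Sum.inr
  have hSapp : ∀ x, S x = T (x ∘ Sum.inl) + QLFAux.lc v (x ∘ Sum.inr) := by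
    intro x
    show T (x ∘ Sum.inl) + Z.subtype (QLFAux.lc (fun j => zb j) (x ∘ Sum.inr)) = _
    rw [hcoeZ]
    rfl
  have hS : ∀ x, QLF.eval 2 (Sum.elim πf (fun j => b * QLF.eval 2 πf (w j))) x
      = QLF.eval 2 ψ (S x) := by
    intro x
    rw [hSapp, QLFAux.eval_add, ← hT, hZeval, QLF.eval, Fintype.sum_sum_type]
    congr 1
    rw [QLFAux.lc_apply, QLFAux.eval_lincomb, Finset.mul_sum]
    refine Finset.sum_congr rfl fun j _ => ?_
    show Sum.elim πf (fun j => b * QLF.eval 2 πf (w j)) (Sum.inr j) * x (Sum.inr j) ^ 2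
      = b * (x (Sum.inr j) ^ 2 * QLF.eval 2 πf (w j))
    rw [Sum.elim_inr]
    ring
  have hSinj : Function.Injective S := by
    rw [← LinearMap.ker_eq_bot]
    refine LinearMap.ker_eq_bot'.2 fun x hx => ?_
    rw [hSapp] at hx
    have hTx : T (x ∘ Sum.inl) = -(QLFAux.lc v (x ∘ Sum.inr)) :=
      eq_neg_of_add_eq_zero_left hx
    have h1 : QLF.eval 2 πf (x ∘ Sum.inl)
        = b * QLF.eval 2 πf (QLFAux.lc w (x ∘ Sum.inr)) := by
      rw [hT, hTx, QLFAux.eval_neg, hZeval]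
    have h2 : QLF.eval 2 πf (x ∘ Sum.inl)
        + b * QLF.eval 2 πf (QLFAux.lc w (x ∘ Sum.inr)) = 0 := by
      rw [h1, CharTwo.add_self_eq_zero]
    obtain ⟨hy, hz⟩ := key0 _ _ h2
    have hinl : x ∘ Sum.inl = 0 := hy
    have hlcv : QLFAux.lc v (x ∘ Sum.inr) = 0 := by
      have hx' := hx
      rw [hinl, map_zero, zero_add] at hx'
      exact hx'
    have hinr : x ∘ Sum.inr = 0 := hbz _ hlcv
    funext i
    cases i with
    | inl e => exact congrFun hinl e
    | inr j => exact congrFun hinr j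
  have hSsurj : Function.Surjective S := by
    intro vv
    obtain ⟨y, z, hyz⟩ := hval vv
    have hvz : QLF.eval 2 ψ (vv + T y) = b * QLF.eval 2 πf z := by
      rw [QLFAux.eval_add, ← hT, hyz, add_comm (QLF.eval 2 πf y), add_assoc,
        CharTwo.add_self_eq_zero, add_zero]
    refine ⟨Sum.elim y (fun j => zb.repr ⟨vv + T y, ⟨z, hvz⟩⟩ j), ?_⟩
    rw [hSapp]
    have h1 : (Sum.elim y (fun j => zb.repr ⟨vv + T y, ⟨z, hvz⟩⟩ j)) ∘ Sum.inl = y := rfl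
    have h2 : (Sum.elim y (fun j => zb.repr ⟨vv + T y, ⟨z, hvz⟩⟩ j)) ∘ Sum.inr
        = fun j => zb.repr ⟨vv + T y, ⟨z, hvz⟩⟩ j := rfl
    rw [h1, h2, hcoeZ]
    have h3 : QLFAux.lc (fun j => zb j) (fun j => zb.repr ⟨vv + T y, ⟨z, hvz⟩⟩ j)
        = (⟨vv + T y, ⟨z, hvz⟩⟩ : Z) := zb.sum_repr _
    rw [h3]
    show T y + (vv + T y) = vv
    have htt : T y + T y = (0 : Fin m → F) := by
      funext i
      exact CharTwo.add_self_eq_zero (T y i)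
    rw [add_comm vv, ← add_assoc, htt, zero_add]
  let Seq := LinearEquiv.ofBijective S ⟨hSinj, hSsurj⟩
  refine ⟨s, fun j => QLF.eval 2 πf (w j), ⟨QLFAux.lc w, hUinj, hUeval⟩,
    Seq.symm, fun x => ?_⟩
  have hx : S (Seq.symm x) = x := Seq.apply_symm_apply x
  conv_lhs => rw [← hx]
  exact (hS (Seq.symm x)).symm
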